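/- Let A be unital, let n be even, let f be an equivariant cyclic n-cocycle on (A,H) (bf = 0 and λ_H^* f = (−1)^n f), let a ∈ A be H-invariant (h·a = a for all h ∈ H) and nilpotent, set u = exp(a), and let e ∈ A be an H-invariant idempotent (e² = e and h·e = e for all h ∈ H). Then f(u e u^{-1}, u e u^{-1}, …, u e u^{-1} | h) = f(e, e, …, e | h) for every h ∈ H; that is, the pairing value ⟨f, e⟩(h) is invariant under conjugation of e by the H-invariant invertible element u. -/

import Mathlib

open scoped BigOperators

namespace EquivCyclic

noncomputable section

/-- An `n`-cochain on `(A, H)`: an `(n+1)`-ary map from `A` to the space of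
complex-valued functions on `H`.  Multilinearity is imposed separately. -/
abbrev Cochain (A H : Type*) (n : ℕ) : Type _ := (Fin (n + 1) → A) → H → ℂ

variable {A H : Type*} [Ring A] [Algebra ℂ A] [Group H]

/-- `f` is `(n+1)`-linear over `ℂ`. -/
def IsMultilinear (n : ℕ) (f : Cochain A H n) : Prop :=
  ∀ (a : Fin (n + 1) → A) (i : Fin (n + 1)) (h : H),
    (∀ x y : A,
      f (Function.update a i (x + y)) h =
        f (Function.update a i x) h + f (Function.update a i y) h) ∧
    (∀ (c : ℂ) (x : A),
      f (Function.update a i (c • x)) h = c * f (Function.update a i x) h)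

/-- `act` is an action of the group `H` on `A` by (complex) algebra
automorphisms. -/
def IsAlgAction (act : H → A → A) : Prop :=
  (∀ x : A, act 1 x = x) ∧
  (∀ (g h : H) (x : A), act (g * h) x = act g (act h x)) ∧
  (∀ (h : H) (x y : A), act h (x + y) = act h x + act h y) ∧
  (∀ (h : H) (x y : A), act h (x * y) = act h x * act h y) ∧
  (∀ (h : H) (c : ℂ) (x : A), act h (c • x) = c • act h x)

/-- Equivariance of a cochain:
`f(h·a⁰, …, h·aⁿ)(h g h⁻¹) = f(a⁰, …, aⁿ)(g)`. -/
def IsEquivariant (act : H → A → A) (n : ℕ) (f : Cochain A H n) : Prop :=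
  ∀ (g h : H) (a : Fin (n + 1) → A),
    f (fun i => act h (a i)) (h * g * h⁻¹) = f a g

/-- An equivariant `n`-cochain on `(A, H)`: an `(n+1)`-linear map satisfying
the equivariance condition. -/
def IsEquivCochain (act : H → A → A) (n : ℕ) (f : Cochain A H n) : Prop :=
  IsMultilinear n f ∧ IsEquivariant act n f

/-- The operator `b'`:
`(b'f)(a⁰,…,aⁿ⁺¹|h) = Σ_{j=0}^{n} (−1)^j f(a⁰,…,aʲaʲ⁺¹,…,aⁿ⁺¹|h)`. -/
def bPrime (n : ℕ) (f : Cochain A H n) : Cochain A H (n + 1) :=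
  fun a h =>
    ∑ j : Fin (n + 1),
      (-1 : ℂ) ^ (j : ℕ) *
        f (fun i =>
            if (i : ℕ) < (j : ℕ) then a i.castSucc
            else if (i : ℕ) = (j : ℕ) then a i.castSucc * a i.succ
            else a i.succ) h

/-- The equivariant Hochschild differential `b`:
`(bf)(a⁰,…,aⁿ⁺¹|h) = (b'f)(a⁰,…,aⁿ⁺¹|h) + (−1)^{n+1} f((h⁻¹·aⁿ⁺¹)a⁰, a¹,…,aⁿ|h)`. -/
def bOp (act : H → A → A) (n : ℕ) (f : Cochain A H n) : Cochain A H (n + 1) :=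
  fun a h =>
    bPrime n f a h +
      (-1 : ℂ) ^ (n + 1) *
        f (fun i =>
            if (i : ℕ) = 0 then act h⁻¹ (a (Fin.last (n + 1))) * a 0
            else a i.castSucc) h

/-- The equivariant cyclic permutation `λ_H^*`:
`(λ_H^* f)(a⁰,…,aⁿ|h) = f(h⁻¹·aⁿ, a⁰,…,aⁿ⁻¹|h)`. -/
def lamOp (act : H → A → A) (n : ℕ) (f : Cochain A H n) : Cochain A H n :=
  fun a h =>
    f (fun i =>
        if (i : ℕ) = 0 then act h⁻¹ (a (Fin.last n))
        else a ⟨(i : ℕ) - 1, lt_of_le_of_lt (Nat.sub_le _ _) i.isLt⟩) h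

/-- The cyclic antisymmetrizer `A f = Σ_{j=0}^{n} (−1)^{nj} (λ_H^*)^j f`. -/
def antisymOp (act : H → A → A) (n : ℕ) (f : Cochain A H n) : Cochain A H n :=
  fun a h =>
    ∑ j : Fin (n + 1), (-1 : ℂ) ^ (n * (j : ℕ)) * ((lamOp act n)^[(j : ℕ)] f) a h

/-- A cochain is cyclic if `λ_H^* f = (−1)^n f`. -/
def IsCyclic (act : H → A → A) (n : ℕ) (f : Cochain A H n) : Prop :=
  lamOp act n f = ((-1 : ℂ) ^ n) • f

/-- The cochain `f_a(a⁰,…,aⁿ⁻¹|h) = f(a⁰,…,aⁿ⁻¹,a|h)`. -/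
def contract (n : ℕ) (f : Cochain A H (n + 1)) (a : A) : Cochain A H n :=
  fun v h => f (fun i => if hi : (i : ℕ) < n + 1 then v ⟨(i : ℕ), hi⟩ else a) h

/-- `(δ_a^* f)(a⁰,…,aⁿ|h) = Σ_{i=0}^{n} f(a⁰,…, a aⁱ − aⁱ a, …, aⁿ|h)`. -/
def deltaStar (n : ℕ) (a : A) (f : Cochain A H n) : Cochain A H n :=
  fun v h => ∑ i : Fin (n + 1), f (Function.update v i (a * v i - v i * a)) h

/-- The exponential `exp(a) = Σ_k a^k/k!` of a nilpotent element with
`a ^ N = 0`; the sum is finite. -/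
def expNil (a : A) (N : ℕ) : A :=
  ∑ k ∈ Finset.range N, ((k.factorial : ℂ))⁻¹ • a ^ k

variable {m : ℕ}

/-- The action of `H` on `A ⊗ End(ℂᵐ)`, realized as `m × m` matrices over `A`:
`h · M = U(h) (h·M) U(h)⁻¹`. -/
def matAct (act : H → A → A) (U : H →* Matrix.unitaryGroup (Fin m) ℂ) :
    H → Matrix (Fin m) (Fin m) A → Matrix (Fin m) (Fin m) A :=
  fun h M =>
    ((U h : Matrix (Fin m) (Fin m) ℂ).map fun c => algebraMap ℂ A c) *
      (M.map (act h)) *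
      ((U h⁻¹ : Matrix (Fin m) (Fin m) ℂ).map fun c => algebraMap ℂ A c)

/-- The cochain `f ♯ tr` on `A ⊗ End(ℂᵐ)`, realized as matrices over `A`:
on elementary tensors it is `f(a⁰,…,aⁿ|h) · tr(T⁰ ⋯ Tⁿ U(h))`. -/
def sharpTr (n : ℕ) (f : Cochain A H n) (U : H →* Matrix.unitaryGroup (Fin m) ℂ) :
    Cochain (Matrix (Fin m) (Fin m) A) H n :=
  fun M h =>
    ∑ idx : Fin (n + 2) → Fin m,
      f (fun j => M j (idx j.castSucc) (idx j.succ)) h *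
        (U h : Matrix (Fin m) (Fin m) ℂ) (idx (Fin.last (n + 1))) (idx 0)

-- ==================== auxiliary development ====================


open Polynomial Finset
set_option linter.unusedSectionVars false

/-- Package a multilinear cochain at a fixed group element as a `MultilinearMap`. -/
def toML (n : ℕ) (f : Cochain A H n) (hf : IsMultilinear n f) (h : H) :
    MultilinearMap ℂ (fun _ : Fin (n + 1) => A) ℂ where
  toFun v := f v h
  map_update_add' := by
    intro inst v i x y
    have hi : inst = instDecidableEqFin (n + 1) := Subsingleton.elim _ _
    subst hi
    exact (hf v i h).1 x y
  map_update_smul' := by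
    intro inst v i c x
    have hi : inst = instDecidableEqFin (n + 1) := Subsingleton.elim _ _
    subst hi
    simpa [smul_eq_mul] using (hf v i h).2 c x

@[simp] theorem toML_apply (n : ℕ) (f : Cochain A H n) (hf : IsMultilinear n f) (h : H)
    (v : Fin (n + 1) → A) : toML n f hf h v = f v h := rfl

theorem upd_eq {n : ℕ} (w y : A) (p : Fin (n + 1)) :
    Function.update (fun _ : Fin (n + 1) => w) p y =
      fun i : Fin (n + 1) => if (i : ℕ) = (p : ℕ) then y else w := by
  funext i
  simp [Function.update_apply, Fin.ext_iff]

theorem rot_eq (act : H → A → A) (n : ℕ) (hn : Even n) (f : Cochain A H n)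
    (hcyc : IsCyclic act n f) (h : H) (v : Fin (n + 1) → A)
    (hlast : act h⁻¹ (v (Fin.last n)) = v (Fin.last n)) :
    f (fun i : Fin (n + 1) =>
        if (i : ℕ) = 0 then v (Fin.last n)
        else v ⟨(i : ℕ) - 1, lt_of_le_of_lt (Nat.sub_le _ _) i.isLt⟩) h = f v h := by
  have h1 := congrFun (congrFun hcyc v) h
  simp only [lamOp, Pi.smul_apply, smul_eq_mul, hn.neg_one_pow, one_mul] at h1
  rw [← h1]
  congr 1
  funext i
  split <;> simp [hlast]

theorem update_move (act : H → A → A) (n : ℕ) (hn : Even n) (f : Cochain A H n)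
    (hcyc : IsCyclic act n f) (h : H) (w y : A) (hw : act h⁻¹ w = w) (j : Fin (n + 1)) :
    f (Function.update (fun _ => w) j y) h =
      f (Function.update (fun _ => w) (0 : Fin (n + 1)) y) h := by
  obtain ⟨jv, hjv⟩ := j
  induction jv with
  | zero => rfl
  | succ k ih =>
    have hk : k < n + 1 := Nat.lt_of_succ_lt hjv
    have hkn : k < n := Nat.lt_of_succ_lt_succ hjv
    rw [← ih hk]
    have hvlast : act h⁻¹ ((Function.update (fun _ => w) (⟨k, hk⟩ : Fin (n + 1)) y)
        (Fin.last n)) = (Function.update (fun _ => w) (⟨k, hk⟩ : Fin (n + 1)) y)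
        (Fin.last n) := by
      rw [Function.update_of_ne (by simp [Fin.ext_iff]; omega)]
      exact hw
    rw [← rot_eq act n hn f hcyc h _ hvlast]
    congr 1
    funext i
    simp only [upd_eq, Fin.val_last]
    rcases eq_or_ne (i : ℕ) (k + 1) with hik | hik
    · rw [if_pos hik, if_neg (show ¬(i : ℕ) = 0 by omega),
        if_pos (show (i : ℕ) - 1 = k by omega)]
    · rw [if_neg hik]
      by_cases h0 : (i : ℕ) = 0
      · rw [if_pos h0, if_neg (show ¬n = k by omega)]
      · rw [if_neg h0, if_neg (show ¬(i : ℕ) - 1 = k by omega)]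

theorem comm_pair (act : H → A → A) (n : ℕ) (hn : Even n) (f : Cochain A H n)
    (hml : IsMultilinear n f) (hcyc : IsCyclic act n f) (hcoc : bOp act n f = 0)
    (h : H) (x w : A) (hid : w * w = w) (hx : act h⁻¹ x = x) (hw : act h⁻¹ w = w)
    (j : Fin (n + 1)) :
    f (Function.update (fun _ => w) j (x * w - w * x)) h = 0 := by
  rw [update_move act n hn f hcyc h w _ hw j]
  have hsub : f (Function.update (fun _ => w) (0 : Fin (n + 1)) (x * w - w * x)) h
      = f (Function.update (fun _ => w) (0 : Fin (n + 1)) (x * w)) h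
        - f (Function.update (fun _ => w) (0 : Fin (n + 1)) (w * x)) h :=
    MultilinearMap.map_update_sub (toML n f hml h) (fun _ => w) 0 (x * w) (w * x)
  rw [hsub]
  have key : f (Function.update (fun _ => w) (0 : Fin (n + 1)) (w * x)) h
      = f (Function.update (fun _ => w) (0 : Fin (n + 1)) (x * w)) h := by
    set v : Fin (n + 2) → A := fun i => if (i : ℕ) = 1 then x else w with hv
    have h0 := congrFun (congrFun hcoc v) h
    simp only [bOp, Pi.zero_apply] at h0
    rcases Nat.eq_zero_or_pos n with hn0 | hnpos
    · subst hn0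
      simp only [bPrime, Fin.sum_univ_one] at h0
      norm_num [hv] at h0
      rw [hx] at h0
      have e : ∀ y : A, Function.update (fun _ => w) (0 : Fin (0 + 1)) y
          = (fun _ : Fin (0 + 1) => y) := by
        intro y
        rw [upd_eq]
        funext i
        simp
      rw [e, e]
      linear_combination h0
    · have h2 : 2 ≤ n := by
        rcases hn with ⟨m, hm⟩; omega
      have m0 : (fun i : Fin (n + 1) =>
          if (i : ℕ) < (0 : ℕ) then v i.castSucc
          else if (i : ℕ) = (0 : ℕ) then v i.castSucc * v i.succ
          else v i.succ)
          = fun i : Fin (n + 1) => if (i : ℕ) = 0 then w * x else w := by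
        funext i
        simp only [hv, Fin.coe_castSucc, Fin.val_succ]
        split_ifs <;> first | rfl | omega | exact hid
      have m1 : (fun i : Fin (n + 1) =>
          if (i : ℕ) < (1 : ℕ) then v i.castSucc
          else if (i : ℕ) = (1 : ℕ) then v i.castSucc * v i.succ
          else v i.succ)
          = fun i : Fin (n + 1) => if (i : ℕ) = 1 then x * w else w := by
        funext i
        simp only [hv, Fin.coe_castSucc, Fin.val_succ]
        split_ifs <;> first | rfl | omega | exact hid
      have hb : bPrime n f v h = ∑ j ∈ range (n + 1),
          ((-1 : ℂ) ^ j * f (fun i : Fin (n + 1) =>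
            if (i : ℕ) < j then v i.castSucc
            else if (i : ℕ) = j then v i.castSucc * v i.succ
            else v i.succ) h) := by
        simp only [bPrime]
        exact Fin.sum_univ_eq_sum_range (fun j => (-1 : ℂ) ^ j *
          f (fun i : Fin (n + 1) =>
            if (i : ℕ) < j then v i.castSucc
            else if (i : ℕ) = j then v i.castSucc * v i.succ
            else v i.succ) h) (n + 1)
      rw [hb, range_eq_Ico,
        ← Finset.sum_Ico_consecutive _ (show 0 ≤ 2 by omega) (show 2 ≤ n + 1 by omega)]
        at h0
      have hico2 : Finset.Ico 0 2 = ({0, 1} : Finset ℕ) := by decide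
      rw [hico2, Finset.sum_insert (by decide), Finset.sum_singleton] at h0
      have hIcoEq : ∑ j ∈ Finset.Ico 2 (n + 1), ((-1 : ℂ) ^ j * f (fun i : Fin (n + 1) =>
            if (i : ℕ) < j then v i.castSucc
            else if (i : ℕ) = j then v i.castSucc * v i.succ
            else v i.succ) h)
          = (∑ j ∈ Finset.Ico 2 (n + 1), (-1 : ℂ) ^ j) *
              f (fun i : Fin (n + 1) => if (i : ℕ) = 1 then x else w) h := by
        rw [Finset.sum_mul]
        refine Finset.sum_congr rfl ?_
        intro j hj
        rw [Finset.mem_Ico] at hj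
        congr 2
        funext i
        simp only [hv, Fin.coe_castSucc, Fin.val_succ]
        split_ifs <;> first | rfl | omega | exact hid
      have hsign : (∑ j ∈ Finset.Ico 2 (n + 1), (-1 : ℂ) ^ j) = 1 := by
        have t1 : ∑ j ∈ range (n + 1), (-1 : ℂ) ^ j = 1 := by
          rw [neg_one_geom_sum, if_neg (by simp [Nat.even_add_one, hn])]
        rw [range_eq_Ico,
          ← Finset.sum_Ico_consecutive _ (show 0 ≤ 2 by omega) (show 2 ≤ n + 1 by omega),
          hico2, Finset.sum_insert (by decide), Finset.sum_singleton] at t1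
        norm_num at t1
        exact t1
      have htw : (fun i : Fin (n + 1) =>
          if (i : ℕ) = 0 then act h⁻¹ (v (Fin.last (n + 1))) * v 0 else v i.castSucc)
          = fun i : Fin (n + 1) => if (i : ℕ) = 1 then x else w := by
        funext i
        simp only [hv, Fin.coe_castSucc, Fin.val_last, Fin.val_zero]
        split_ifs <;>
          first | rfl | omega | exact False.elim (by assumption) | exact hid |
            (rw [hw]; exact hid)
      have hpow : (-1 : ℂ) ^ (n + 1) = -1 := Odd.neg_one_pow (Even.add_one hn)
      rw [hIcoEq, hsign, htw, hpow, m0, m1] at h0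
      norm_num at h0
      have hmove := update_move act n hn f hcyc h w (x * w) hw ⟨1, by omega⟩
      rw [upd_eq, upd_eq] at hmove
      simp only [Fin.val_mk, Fin.val_zero] at hmove
      rw [upd_eq, upd_eq]
      simp only [Fin.val_zero]
      simp only [Fin.val_eq_zero_iff] at h0 hmove ⊢
      linear_combination h0 + hmove
  rw [key]
  ring
-- ===== chunk 2: polynomial exponential infrastructure =====

theorem factorial_sum_eq (m : ℕ) :
    (∑ k ∈ range (m + 1),
        ((k.factorial : ℂ))⁻¹ * ((((m - k).factorial : ℂ))⁻¹ * (-1 : ℂ) ^ (m - k)))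
      = if m = 0 then 1 else 0 := by
  have h1 : ((0 : ℂ)) ^ m = ∑ k ∈ range (m + 1), (-1 : ℂ) ^ (m - k) * (m.choose k : ℂ) := by
    have := add_pow (1 : ℂ) (-1) m
    norm_num at this
    simpa using this
  have h2 : ∀ k ∈ range (m + 1), (-1 : ℂ) ^ (m - k) * (m.choose k : ℂ)
      = (m.factorial : ℂ) *
        (((k.factorial : ℂ))⁻¹ * ((((m - k).factorial : ℂ))⁻¹ * (-1 : ℂ) ^ (m - k))) := by
    intro k hk
    rw [Finset.mem_range] at hk
    rw [Nat.cast_choose ℂ (by omega : k ≤ m)]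
    have hk0 : (k.factorial : ℂ) ≠ 0 := Nat.cast_ne_zero.2 k.factorial_ne_zero
    have hmk0 : ((m - k).factorial : ℂ) ≠ 0 := Nat.cast_ne_zero.2 (m - k).factorial_ne_zero
    field_simp
  rw [Finset.sum_congr rfl h2, ← Finset.mul_sum] at h1
  have hm0 : (m.factorial : ℂ) ≠ 0 := Nat.cast_ne_zero.2 m.factorial_ne_zero
  rcases Nat.eq_zero_or_pos m with rfl | hm
  · norm_num
  · rw [if_neg (by omega)]
    rw [zero_pow (by omega)] at h1
    exact ((mul_eq_zero.mp h1.symm).resolve_left hm0)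

/-- truncated exponential as a polynomial -/
def expP (N : ℕ) (x : A) : Polynomial A :=
  ∑ k ∈ range N, Polynomial.monomial k ((k.factorial : ℂ)⁻¹ • x ^ k)

/-- evaluation of an `A`-polynomial at the central element `algebraMap ℂ A t` -/
def ev (t : ℂ) : Polynomial A →+* A :=
  Polynomial.eval₂RingHom' (RingHom.id A) (algebraMap ℂ A t)
    (fun a => (Algebra.commutes t a).symm)

theorem ev_C (t : ℂ) (c : A) : ev t (Polynomial.C c) = c := by
  show Polynomial.eval₂ (RingHom.id A) (algebraMap ℂ A t) (Polynomial.C c) = c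
  rw [Polynomial.eval₂_C, RingHom.id_apply]

theorem ev_monomial (t : ℂ) (k : ℕ) (c : A) :
    ev t (Polynomial.monomial k c) = t ^ k • c := by
  show Polynomial.eval₂ (RingHom.id A) (algebraMap ℂ A t) (Polynomial.monomial k c)
    = t ^ k • c
  rw [Polynomial.eval₂_monomial, RingHom.id_apply, ← map_pow, ← Algebra.commutes,
    ← Algebra.smul_def]

theorem ev_expP (N : ℕ) (t : ℂ) (x : A) :
    ev t (expP N x) = ∑ k ∈ range N, t ^ k • ((k.factorial : ℂ)⁻¹ • x ^ k) := by
  rw [expP, map_sum]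
  exact Finset.sum_congr rfl fun k _ => ev_monomial t k _

theorem ev_expP_zero (N : ℕ) (hN : 0 < N) (x : A) : ev (0 : ℂ) (expP N x) = 1 := by
  rw [ev_expP]
  rw [Finset.sum_eq_single 0]
  · norm_num
  · intro k _ hk0
    rw [zero_pow hk0, zero_smul]
  · intro habs
    exact absurd (Finset.mem_range.2 hN) habs

theorem pow_eq_zero_of_le {x : A} {N m : ℕ} (hx : x ^ N = 0) (hm : N ≤ m) : x ^ m = 0 := by
  calc x ^ m = x ^ N * x ^ (m - N) := by rw [← pow_add]; congr 1; omega
  _ = 0 := by rw [hx, zero_mul]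

theorem expP_mul_neg (N : ℕ) (hN : 0 < N) (x : A) (hx : x ^ N = 0) :
    expP N x * expP N (-x) = 1 := by
  have step1 : expP N x * expP N (-x)
      = ∑ p ∈ (range N) ×ˢ (range N),
          ((p.1.factorial : ℂ)⁻¹ * ((p.2.factorial : ℂ)⁻¹ * (-1 : ℂ) ^ p.2)) •
            Polynomial.monomial (p.1 + p.2) (x ^ (p.1 + p.2)) := by
    rw [expP, expP, Finset.sum_mul_sum, ← Finset.sum_product']
    refine Finset.sum_congr rfl fun p _ => ?_
    rw [Polynomial.monomial_mul_monomial]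
    have hneg : (-x) ^ p.2 = (-1 : ℂ) ^ p.2 • x ^ p.2 := by
      rw [← _root_.smul_pow, neg_one_smul]
    rw [hneg, smul_smul, smul_mul_smul_comm, ← pow_add, ← Polynomial.smul_monomial]
  rw [step1, ← Finset.sum_filter_add_sum_filter_not ((range N) ×ˢ (range N))
    (fun p => p.1 + p.2 < N)]
  have hzero : ∑ p ∈ ((range N) ×ˢ (range N)).filter (fun p => ¬p.1 + p.2 < N),
      ((p.1.factorial : ℂ)⁻¹ * ((p.2.factorial : ℂ)⁻¹ * (-1 : ℂ) ^ p.2)) •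
        Polynomial.monomial (p.1 + p.2) (x ^ (p.1 + p.2)) = 0 := by
    refine Finset.sum_eq_zero fun p hp => ?_
    rw [Finset.mem_filter] at hp
    rw [pow_eq_zero_of_le hx (by omega : N ≤ p.1 + p.2), map_zero, smul_zero]
  rw [hzero, add_zero]
  have hre : ∑ p ∈ ((range N) ×ˢ (range N)).filter (fun p => p.1 + p.2 < N),
      ((p.1.factorial : ℂ)⁻¹ * ((p.2.factorial : ℂ)⁻¹ * (-1 : ℂ) ^ p.2)) •
        Polynomial.monomial (p.1 + p.2) (x ^ (p.1 + p.2))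
      = ∑ q ∈ (range N).sigma (fun m => range (m + 1)),
          ((q.2.factorial : ℂ)⁻¹ * (((q.1 - q.2).factorial : ℂ)⁻¹ * (-1 : ℂ) ^ (q.1 - q.2))) •
            Polynomial.monomial q.1 (x ^ q.1) := by
    refine Finset.sum_nbij' (fun p => ⟨p.1 + p.2, p.1⟩) (fun q => (q.2, q.1 - q.2))
      ?_ ?_ ?_ ?_ ?_
    · intro p hp
      simp only [Finset.mem_filter, Finset.mem_product, Finset.mem_range] at hp
      simp only [Finset.mem_sigma, Finset.mem_range]
      omega
    · intro q hq
      simp only [Finset.mem_sigma, Finset.mem_range] at hq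
      simp only [Finset.mem_filter, Finset.mem_product, Finset.mem_range]
      omega
    · intro p hp
      obtain ⟨p1, p2⟩ := p
      simp only [Finset.mem_filter, Finset.mem_product, Finset.mem_range] at hp
      simp only [Prod.mk.injEq]
      exact ⟨trivial, by omega⟩
    · intro q hq
      simp only [Finset.mem_sigma, Finset.mem_range] at hq
      obtain ⟨m, k⟩ := q
      simp only [Finset.mem_sigma, Finset.mem_range] at hq
      have hk : k + (m - k) = m := by omega
      simp [hk]
    · intro p hp
      simp only [Finset.mem_filter, Finset.mem_product, Finset.mem_range] at hp
      have : p.1 + p.2 - p.1 = p.2 := by omega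
      simp [this]
  rw [hre, Finset.sum_sigma]
  have hinner : ∀ m ∈ range N,
      (∑ k ∈ range (m + 1),
        ((k.factorial : ℂ)⁻¹ * (((m - k).factorial : ℂ)⁻¹ * (-1 : ℂ) ^ (m - k))) •
          Polynomial.monomial m (x ^ m))
      = if m = 0 then Polynomial.monomial m (x ^ m) else 0 := by
    intro m _
    rw [← Finset.sum_smul, factorial_sum_eq]
    split_ifs with hm
    · rw [one_smul]
    · rw [zero_smul]
  rw [Finset.sum_congr rfl hinner, Finset.sum_ite_eq' (range N) 0
    (fun m => Polynomial.monomial m (x ^ m))]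
  rw [if_pos (Finset.mem_range.2 hN), pow_zero, Polynomial.monomial_zero_left, map_one]
-- ===== chunk 3: difference quotients, action lemmas, polynomiality =====

def WP (N : ℕ) (x : A) (s : ℂ) : Polynomial A :=
  ∑ k ∈ range N, ∑ p ∈ range k,
    Polynomial.monomial p (((k.factorial : ℂ)⁻¹ * s ^ (k - 1 - p)) • x ^ k)

theorem ev_WP (N : ℕ) (x : A) (s t : ℂ) :
    ev t (WP N x s) = ∑ k ∈ range N, ∑ p ∈ range k,
      (t ^ p * ((k.factorial : ℂ)⁻¹ * s ^ (k - 1 - p))) • x ^ k := by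
  rw [WP, map_sum]
  refine Finset.sum_congr rfl fun k _ => ?_
  rw [map_sum]
  refine Finset.sum_congr rfl fun p _ => ?_
  rw [ev_monomial, smul_smul]

theorem G1 (N : ℕ) (x : A) (s t : ℂ) :
    (t - s) • ev t (WP N x s) = ev t (expP N x) - ev s (expP N x) := by
  rw [ev_WP, ev_expP, ev_expP, Finset.smul_sum, ← Finset.sum_sub_distrib]
  refine Finset.sum_congr rfl fun k _ => ?_
  rw [Finset.smul_sum]
  have h1 : ∀ p ∈ range k,
      (t - s) • ((t ^ p * ((k.factorial : ℂ)⁻¹ * s ^ (k - 1 - p))) • x ^ k)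
      = ((k.factorial : ℂ)⁻¹ * (t ^ p * s ^ (k - 1 - p) * (t - s))) • x ^ k := by
    intro p _
    rw [smul_smul]
    congr 1
    ring
  have h3 : (∑ p ∈ range k, (k.factorial : ℂ)⁻¹ * (t ^ p * s ^ (k - 1 - p) * (t - s)))
      = (k.factorial : ℂ)⁻¹ * (t ^ k - s ^ k) := by
    rw [← Finset.mul_sum, ← Finset.sum_mul, geom_sum₂_mul]
  rw [Finset.sum_congr rfl h1, ← Finset.sum_smul, h3, smul_smul, smul_smul, ← sub_smul]
  congr 1
  ring

theorem G2 (M : ℕ) (x : A) (hx : x ^ (M + 1) = 0) (s : ℂ) :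
    ev s (WP (M + 1) x s) = x * ev s (expP (M + 1) x) := by
  rw [ev_WP, ev_expP]
  have hL : ∀ k ∈ range (M + 1), (∑ p ∈ range k,
      (s ^ p * ((k.factorial : ℂ)⁻¹ * s ^ (k - 1 - p))) • x ^ k)
      = ((k : ℂ) * ((k.factorial : ℂ)⁻¹ * s ^ (k - 1))) • x ^ k := by
    intro k _
    rw [← Finset.sum_smul]
    congr 1
    have h2 : ∀ p ∈ range k, s ^ p * ((k.factorial : ℂ)⁻¹ * s ^ (k - 1 - p))
        = (k.factorial : ℂ)⁻¹ * s ^ (k - 1) := by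
      intro p hp
      rw [Finset.mem_range] at hp
      rw [← mul_assoc, mul_comm (s ^ p), mul_assoc, ← pow_add]
      congr 2
      omega
    rw [Finset.sum_congr rfl h2, Finset.sum_const, Finset.card_range, nsmul_eq_mul]
  rw [Finset.sum_congr rfl hL, Finset.mul_sum]
  have hR : ∀ k ∈ range (M + 1), x * s ^ k • ((k.factorial : ℂ)⁻¹ • x ^ k)
      = (s ^ k * (k.factorial : ℂ)⁻¹) • x ^ (k + 1) := by
    intro k _
    rw [smul_smul, mul_smul_comm, ← pow_succ']
  rw [Finset.sum_congr rfl hR,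
    Finset.sum_range_succ' (fun k => ((k : ℂ) * ((k.factorial : ℂ)⁻¹ * s ^ (k - 1))) • x ^ k) M,
    Finset.sum_range_succ (fun k => (s ^ k * (k.factorial : ℂ)⁻¹) • x ^ (k + 1)) M,
    hx, smul_zero, add_zero]
  norm_num
  refine Finset.sum_congr rfl fun j _ => ?_
  congr 1
  have hj0 : ((j : ℂ) + 1) ≠ 0 := by
    exact_mod_cast Nat.succ_ne_zero j
  have hjf : ((j.factorial : ℂ)) ≠ 0 := Nat.cast_ne_zero.2 j.factorial_ne_zero
  rw [Nat.factorial_succ]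
  push_cast
  field_simp

theorem commute_ev_expP (N : ℕ) (t : ℂ) (x : A) : Commute x (ev t (expP N x)) := by
  rw [ev_expP]
  refine Commute.sum_right _ _ _ fun k _ => ?_
  exact (((Commute.refl x).pow_right k).smul_right _).smul_right _

theorem act_zero (act : H → A → A) (hact : IsAlgAction act) (g : H) : act g (0 : A) = 0 := by
  have h := hact.2.2.2.2 g 0 (0 : A)
  simpa using h

theorem act_one (act : H → A → A) (hact : IsAlgAction act) (g : H) : act g (1 : A) = 1 := by
  have hz : act g (act g⁻¹ (1 : A)) = 1 := by
    rw [← hact.2.1, mul_inv_cancel, hact.1]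
  calc act g 1 = 1 * act g 1 := (one_mul _).symm
    _ = act g (act g⁻¹ 1) * act g 1 := by rw [hz]
    _ = act g (act g⁻¹ 1 * 1) := (hact.2.2.2.1 g _ _).symm
    _ = act g (act g⁻¹ 1) := by rw [mul_one]
    _ = 1 := hz

theorem act_pow (act : H → A → A) (hact : IsAlgAction act) (g : H) (x : A)
    (hx : act g x = x) : ∀ k, act g (x ^ k) = x ^ k
  | 0 => by rw [pow_zero]; exact act_one act hact g
  | k + 1 => by rw [pow_succ, hact.2.2.2.1, act_pow act hact g x hx k, hx]

theorem act_sum (act : H → A → A) (hact : IsAlgAction act) (g : H) {ι : Type*}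
    (s : Finset ι) (F : ι → A) : act g (∑ i ∈ s, F i) = ∑ i ∈ s, act g (F i) := by
  classical
  induction s using Finset.induction_on with
  | empty => simpa using act_zero act hact g
  | @insert a s hns ih => rw [Finset.sum_insert hns, Finset.sum_insert hns, hact.2.2.1, ih]

theorem act_ev_expP (act : H → A → A) (hact : IsAlgAction act) (g : H) (N : ℕ) (t : ℂ)
    (x : A) (hx : act g x = x) : act g (ev t (expP N x)) = ev t (expP N x) := by
  rw [ev_expP, act_sum act hact g]
  refine Finset.sum_congr rfl fun k _ => ?_
  rw [hact.2.2.2.2, hact.2.2.2.2, act_pow act hact g x hx k]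

theorem poly_of_slots (n : ℕ) (F : MultilinearMap ℂ (fun _ : Fin (n + 1) => A) ℂ)
    (P : Fin (n + 1) → Polynomial A) :
    ∃ G : Polynomial ℂ, ∀ t : ℂ, F (fun i => ev t (P i)) = G.eval t := by
  classical
  set M := (Finset.univ.sup fun i => (P i).natDegree) + 1 with hM
  have hdeg : ∀ i, (P i).natDegree < M :=
    fun i => Nat.lt_succ_of_le (Finset.le_sup (f := fun i => (P i).natDegree)
      (Finset.mem_univ i))
  have hev : ∀ p : Polynomial A, p.natDegree < M → ∀ t,
      ev t p = ∑ k ∈ range M, t ^ k • p.coeff k := by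
    intro p hp t
    have h1 := Polynomial.eval₂_eq_sum_range' (RingHom.id A) hp (algebraMap ℂ A t)
    rw [show ev t p = Polynomial.eval₂ (RingHom.id A) (algebraMap ℂ A t) p from rfl, h1]
    refine Finset.sum_congr rfl fun k _ => ?_
    rw [RingHom.id_apply, ← map_pow, ← Algebra.commutes, ← Algebra.smul_def]
  refine ⟨∑ r ∈ Fintype.piFinset (fun _ : Fin (n + 1) => range M),
      Polynomial.C (F (fun i => (P i).coeff (r i))) * Polynomial.X ^ (∑ i, r i), fun t => ?_⟩
  calc F (fun i => ev t (P i))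
      = F (fun i => ∑ k ∈ range M, t ^ k • (P i).coeff k) := by
        congr 1
        funext i
        exact hev (P i) (hdeg i) t
    _ = ∑ r ∈ Fintype.piFinset (fun _ : Fin (n + 1) => range M),
          F (fun i => t ^ (r i) • (P i).coeff (r i)) := F.map_sum_finset _ _
    _ = ∑ r ∈ Fintype.piFinset (fun _ : Fin (n + 1) => range M),
          (∏ i, t ^ (r i)) • F (fun i => (P i).coeff (r i)) :=
        Finset.sum_congr rfl fun r _ => F.map_smul_univ _ _
    _ = _ := by
        rw [Polynomial.eval_finset_sum]
        refine Finset.sum_congr rfl fun r _ => ?_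
        rw [Polynomial.eval_mul, Polynomial.eval_C, Polynomial.eval_pow, Polynomial.eval_X,
          Finset.prod_pow_eq_pow_sum, smul_eq_mul, mul_comm]
-- ===== chunk 4: the conjugated idempotent and the main theorem =====

def EEp (N : ℕ) (a e : A) : Polynomial A :=
  expP N a * Polynomial.C e * expP N (-a)

def DDp (N : ℕ) (a e : A) (s : ℂ) : Polynomial A :=
  WP N a s * Polynomial.C e * expP N (-a)
    + Polynomial.C (ev s (expP N a)) * Polynomial.C e * WP N (-a) s

theorem ev_EEp (N : ℕ) (a e : A) (t : ℂ) :
    ev t (EEp N a e) = ev t (expP N a) * e * ev t (expP N (-a)) := by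
  simp only [EEp, map_mul, ev_C]

theorem EEp_idem (N : ℕ) (hN : 0 < N) (a e : A) (ha : a ^ N = 0) (he : e * e = e) :
    EEp N a e * EEp N a e = EEp N a e := by
  have hana : (-a) ^ N = 0 := by rw [neg_pow, ha, mul_zero]
  have hVU : expP N (-a) * expP N a = 1 := by
    have h := expP_mul_neg N hN (-a) hana
    rwa [neg_neg] at h
  have h1 : EEp N a e * EEp N a e
      = expP N a * (Polynomial.C e * (expP N (-a) * expP N a) * Polynomial.C e)
          * expP N (-a) := by
    simp only [EEp]
    noncomm_ring
  rw [h1, hVU, mul_one, ← Polynomial.C_mul, he]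
  simp only [EEp, mul_assoc]

theorem ev_EEp_idem (N : ℕ) (hN : 0 < N) (a e : A) (ha : a ^ N = 0) (he : e * e = e)
    (t : ℂ) : ev t (EEp N a e) * ev t (EEp N a e) = ev t (EEp N a e) := by
  rw [← map_mul, EEp_idem N hN a e ha he]

theorem EEp_diff (M : ℕ) (a e : A) (s t : ℂ) :
    ev t (EEp (M + 1) a e) - ev s (EEp (M + 1) a e)
      = (t - s) • ev t (DDp (M + 1) a e s) := by
  have h1 : ev t (DDp (M + 1) a e s)
      = ev t (WP (M + 1) a s) * e * ev t (expP (M + 1) (-a))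
        + ev s (expP (M + 1) a) * e * ev t (WP (M + 1) (-a) s) := by
    simp only [DDp, map_add, map_mul, ev_C]
  have e1 : (t - s) • (ev t (WP (M + 1) a s) * e * ev t (expP (M + 1) (-a)))
      = ((t - s) • ev t (WP (M + 1) a s)) * e * ev t (expP (M + 1) (-a)) := by
    rw [← smul_mul_assoc, ← smul_mul_assoc]
  have e2 : (t - s) • (ev s (expP (M + 1) a) * e * ev t (WP (M + 1) (-a) s))
      = ev s (expP (M + 1) a) * e * ((t - s) • ev t (WP (M + 1) (-a) s)) := by
    rw [mul_smul_comm]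
  rw [h1, smul_add, e1, e2, G1 (M + 1) a s t, G1 (M + 1) (-a) s t, ev_EEp, ev_EEp]
  noncomm_ring

theorem DDp_diag (M : ℕ) (a e : A) (ha : a ^ (M + 1) = 0) (s : ℂ) :
    ev s (DDp (M + 1) a e s)
      = a * ev s (EEp (M + 1) a e) - ev s (EEp (M + 1) a e) * a := by
  have hana : (-a) ^ (M + 1) = 0 := by rw [neg_pow, ha, mul_zero]
  have h1 : ev s (DDp (M + 1) a e s)
      = ev s (WP (M + 1) a s) * e * ev s (expP (M + 1) (-a))
        + ev s (expP (M + 1) a) * e * ev s (WP (M + 1) (-a) s) := by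
    simp only [DDp, map_add, map_mul, ev_C]
  rw [h1, G2 M a ha s, G2 M (-a) hana s,
    (commute_ev_expP (M + 1) s (-a)).eq, ev_EEp]
  noncomm_ring

theorem EEp_act (act : H → A → A) (hact : IsAlgAction act) (g : H) (N : ℕ) (a e : A)
    (ha : act g a = a) (he : act g e = e) (t : ℂ) :
    act g (ev t (EEp N a e)) = ev t (EEp N a e) := by
  have hna : act g (-a) = -a := by
    rw [← neg_one_smul ℂ a, hact.2.2.2.2, ha]
  rw [ev_EEp, hact.2.2.2.1, hact.2.2.2.1, act_ev_expP act hact g N t a ha,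
    act_ev_expP act hact g N t (-a) hna, he]

/-- for `n` even, `f` an equivariant cyclic `n`-cocycle, `a` an
`H`-invariant nilpotent, `u = exp(a)` and `e` an `H`-invariant idempotent,
`f(ueu⁻¹, …, ueu⁻¹|h) = f(e, …, e|h)` for every `h ∈ H`. -/
theorem stmt19 {A H : Type*} [Ring A] [Algebra ℂ A] [Group H]
    (act : H → A → A) (hact : IsAlgAction act)
    (n : ℕ) (hn : Even n) (f : Cochain A H n)
    (hf : IsEquivCochain act n f) (hcyc : IsCyclic act n f)
    (hcoc : bOp act n f = 0)
    (a : A) (hainv : ∀ h : H, act h a = a) (N : ℕ) (hN : a ^ N = 0)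
    (e : A) (he : e * e = e) (heinv : ∀ h : H, act h e = e) :
    ∀ h : H,
      f (fun _ => expNil a N * e * Ring.inverse (expNil a N)) h =
        f (fun _ => e) h := by
  intro h
  rcases Nat.eq_zero_or_pos N with rfl | hNpos
  · have h10 : (0 : A) = 1 := by simpa using hN.symm
    haveI : Subsingleton A := subsingleton_of_zero_eq_one h10
    congr 1
    funext i
    exact Subsingleton.elim _ _
  obtain ⟨M, rfl⟩ : ∃ M, N = M + 1 := ⟨N - 1, by omega⟩
  classical
  set F := toML n f hf.1 h with hFdef
  -- identification of the endpoints
  have hana : (-a) ^ (M + 1) = 0 := by rw [neg_pow, hN, mul_zero]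
  have hUV : expP (M + 1) a * expP (M + 1) (-a) = 1 :=
    expP_mul_neg (M + 1) (Nat.succ_pos M) a hN
  have hVU : expP (M + 1) (-a) * expP (M + 1) a = 1 := by
    have h1 := expP_mul_neg (M + 1) (Nat.succ_pos M) (-a) hana
    rwa [neg_neg] at h1
  have hu1 : ev 1 (expP (M + 1) a) = expNil a (M + 1) := by
    rw [ev_expP, expNil]
    exact Finset.sum_congr rfl fun k _ => by rw [one_pow, one_smul]
  have huv1 : expNil a (M + 1) * ev 1 (expP (M + 1) (-a)) = 1 := by
    rw [← hu1, ← map_mul, hUV, map_one]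
  have hvu1 : ev 1 (expP (M + 1) (-a)) * expNil a (M + 1) = 1 := by
    rw [← hu1, ← map_mul, hVU, map_one]
  have hinv : Ring.inverse (expNil a (M + 1)) = ev 1 (expP (M + 1) (-a)) := by
    have h1 := Ring.inverse_unit ⟨expNil a (M + 1), ev 1 (expP (M + 1) (-a)), huv1, hvu1⟩
    simpa using h1
  have hgoalL : expNil a (M + 1) * e * Ring.inverse (expNil a (M + 1))
      = ev 1 (EEp (M + 1) a e) := by
    rw [hinv, ev_EEp, hu1]
  have hgoalR : ev 0 (EEp (M + 1) a e) = e := by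
    rw [ev_EEp, ev_expP_zero _ (Nat.succ_pos M), ev_expP_zero _ (Nat.succ_pos M),
      one_mul, mul_one]
  -- the path of idempotents
  set g : ℂ → ℂ := fun t => f (fun _ : Fin (n + 1) => ev t (EEp (M + 1) a e)) h with hg
  set Rfun : ℂ → ℂ → ℕ → ℂ := fun s t m =>
    if hm : m < n + 1 then
      f (Function.update
          (fun j : Fin (n + 1) =>
            if (j : ℕ) < m then ev t (EEp (M + 1) a e) else ev s (EEp (M + 1) a e))
          (⟨m, hm⟩ : Fin (n + 1)) (ev t (DDp (M + 1) a e s))) h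
    else 0 with hRfun
  set R : ℂ → ℂ → ℂ := fun s t => ∑ m ∈ range (n + 1), Rfun s t m with hR
  -- the slope identity
  have hslope : ∀ s t : ℂ, g t - g s = (t - s) * R s t := by
    intro s t
    have hpth : ∀ i ∈ range (n + 1),
        (f (fun j : Fin (n + 1) =>
            if (j : ℕ) < i + 1 then ev t (EEp (M + 1) a e) else ev s (EEp (M + 1) a e)) h
          - f (fun j : Fin (n + 1) =>
            if (j : ℕ) < i then ev t (EEp (M + 1) a e) else ev s (EEp (M + 1) a e)) h)
        = (t - s) * Rfun s t i := by
      intro i hi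
      rw [Finset.mem_range] at hi
      have hb1 : (fun j : Fin (n + 1) =>
          if (j : ℕ) < i + 1 then ev t (EEp (M + 1) a e) else ev s (EEp (M + 1) a e))
          = Function.update
              (fun j : Fin (n + 1) =>
                if (j : ℕ) < i then ev t (EEp (M + 1) a e) else ev s (EEp (M + 1) a e))
              (⟨i, hi⟩ : Fin (n + 1)) (ev t (EEp (M + 1) a e)) := by
        funext j
        simp only [Function.update_apply, Fin.ext_iff, Fin.val_mk]
        split_ifs <;> first | rfl | omega
      have hb2 : (fun j : Fin (n + 1) =>
          if (j : ℕ) < i then ev t (EEp (M + 1) a e) else ev s (EEp (M + 1) a e))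
          = Function.update
              (fun j : Fin (n + 1) =>
                if (j : ℕ) < i then ev t (EEp (M + 1) a e) else ev s (EEp (M + 1) a e))
              (⟨i, hi⟩ : Fin (n + 1)) (ev s (EEp (M + 1) a e)) := by
        funext j
        simp only [Function.update_apply, Fin.ext_iff, Fin.val_mk]
        split_ifs <;> first | rfl | omega
      have key := MultilinearMap.map_update_sub F
        (fun j : Fin (n + 1) =>
          if (j : ℕ) < i then ev t (EEp (M + 1) a e) else ev s (EEp (M + 1) a e))
        (⟨i, hi⟩ : Fin (n + 1)) (ev t (EEp (M + 1) a e)) (ev s (EEp (M + 1) a e))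
      have k1 : F (Function.update
          (fun j : Fin (n + 1) =>
            if (j : ℕ) < i then ev t (EEp (M + 1) a e) else ev s (EEp (M + 1) a e))
          (⟨i, hi⟩ : Fin (n + 1)) (ev t (EEp (M + 1) a e)))
          = f (fun j : Fin (n + 1) =>
            if (j : ℕ) < i + 1 then ev t (EEp (M + 1) a e) else ev s (EEp (M + 1) a e)) h := by
        rw [← hb1]
        rfl
      have k2 : F (Function.update
          (fun j : Fin (n + 1) =>
            if (j : ℕ) < i then ev t (EEp (M + 1) a e) else ev s (EEp (M + 1) a e))
          (⟨i, hi⟩ : Fin (n + 1)) (ev s (EEp (M + 1) a e)))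
          = f (fun j : Fin (n + 1) =>
            if (j : ℕ) < i then ev t (EEp (M + 1) a e) else ev s (EEp (M + 1) a e)) h := by
        rw [← hb2]
        rfl
      rw [← k1, ← k2, ← key, EEp_diff M a e s t, MultilinearMap.map_update_smul,
        smul_eq_mul, hRfun]
      simp only [dif_pos hi]
      rfl
    have htel := Finset.sum_range_sub (fun m =>
      f (fun j : Fin (n + 1) =>
        if (j : ℕ) < m then ev t (EEp (M + 1) a e) else ev s (EEp (M + 1) a e)) h) (n + 1)
    have hgt : (fun j : Fin (n + 1) =>
        if (j : ℕ) < n + 1 then ev t (EEp (M + 1) a e) else ev s (EEp (M + 1) a e))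
        = fun _ => ev t (EEp (M + 1) a e) := by
      funext j
      rw [if_pos j.isLt]
    have hgs : (fun j : Fin (n + 1) =>
        if (j : ℕ) < 0 then ev t (EEp (M + 1) a e) else ev s (EEp (M + 1) a e))
        = fun _ => ev s (EEp (M + 1) a e) := by
      funext j
      rw [if_neg (by omega)]
    rw [hgt, hgs] at htel
    calc g t - g s = ∑ i ∈ range (n + 1),
          (f (fun j : Fin (n + 1) =>
              if (j : ℕ) < i + 1 then ev t (EEp (M + 1) a e) else ev s (EEp (M + 1) a e)) h
            - f (fun j : Fin (n + 1) =>
              if (j : ℕ) < i then ev t (EEp (M + 1) a e) else ev s (EEp (M + 1) a e)) h) := by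
          rw [htel, hg]
      _ = ∑ i ∈ range (n + 1), (t - s) * Rfun s t i := Finset.sum_congr rfl hpth
      _ = (t - s) * R s t := by rw [hR, Finset.mul_sum]
  -- the diagonal vanishes
  have hdiag : ∀ s : ℂ, R s s = 0 := by
    intro s
    rw [hR]
    refine Finset.sum_eq_zero fun m hm => ?_
    rw [Finset.mem_range] at hm
    rw [hRfun]
    simp only [dif_pos hm]
    have hbase : (fun j : Fin (n + 1) =>
        if (j : ℕ) < m then ev s (EEp (M + 1) a e) else ev s (EEp (M + 1) a e))
        = fun _ : Fin (n + 1) => ev s (EEp (M + 1) a e) := by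
      funext j
      exact ite_self _
    rw [hbase, DDp_diag M a e hN s]
    exact comm_pair act n hn f hf.1 hcyc hcoc h a (ev s (EEp (M + 1) a e))
      (ev_EEp_idem (M + 1) (Nat.succ_pos M) a e hN he s) (hainv h⁻¹)
      (EEp_act act hact h⁻¹ (M + 1) a e (hainv h⁻¹) (heinv h⁻¹) s) _
  -- polynomiality
  have hRpoly : ∀ s : ℂ, ∃ Q : Polynomial ℂ, ∀ t : ℂ, R s t = Q.eval t := by
    intro s
    have hPP : ∀ (i : Fin (n + 1)) (t : ℂ),
        Function.update
          (fun j : Fin (n + 1) =>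
            if (j : ℕ) < (i : ℕ) then ev t (EEp (M + 1) a e) else ev s (EEp (M + 1) a e))
          i (ev t (DDp (M + 1) a e s))
        = fun j : Fin (n + 1) => ev t (if j = i then DDp (M + 1) a e s
            else if (j : ℕ) < (i : ℕ) then EEp (M + 1) a e
            else Polynomial.C (ev s (EEp (M + 1) a e))) := by
      intro i t
      funext j
      rw [Function.update_apply]
      split_ifs <;> simp [ev_C]
    choose Q hQ using fun i : Fin (n + 1) => poly_of_slots n F
      (fun j : Fin (n + 1) => if j = i then DDp (M + 1) a e s
        else if (j : ℕ) < (i : ℕ) then EEp (M + 1) a e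
        else Polynomial.C (ev s (EEp (M + 1) a e)))
    refine ⟨∑ i : Fin (n + 1), Q i, fun t => ?_⟩
    rw [Polynomial.eval_finset_sum]
    have hRst : R s t = ∑ m ∈ range (n + 1), Rfun s t m := rfl
    rw [hRst, show (∑ m ∈ range (n + 1), Rfun s t m) = ∑ i : Fin (n + 1), Rfun s t (i : ℕ) from
      (Fin.sum_univ_eq_sum_range (Rfun s t) (n + 1)).symm]
    refine Finset.sum_congr rfl fun i _ => ?_
    rw [hRfun]
    simp only [dif_pos i.isLt]
    rw [← hQ i t]
    have : (⟨(i : ℕ), i.isLt⟩ : Fin (n + 1)) = i := Fin.eta i i.isLt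
    rw [this, hPP i t]
    rfl
  have hgpoly : ∃ G : Polynomial ℂ, ∀ t : ℂ, g t = G.eval t := by
    obtain ⟨G, hG⟩ := poly_of_slots n F (fun _ : Fin (n + 1) => EEp (M + 1) a e)
    exact ⟨G, fun t => hG t⟩
  -- zero derivative
  have hder : ∀ s : ℂ, HasDerivAt g 0 s := by
    intro s
    obtain ⟨Q, hQ⟩ := hRpoly s
    have hQs : Polynomial.eval s Q = 0 := by rw [← hQ s]; exact hdiag s
    have hfun : ∀ t : ℂ, g t = g s + (t - s) * Polynomial.eval t Q := by
      intro t
      rw [← hQ t]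
      linear_combination hslope s t
    have h1 : HasDerivAt (fun t : ℂ => t - s) 1 s := (hasDerivAt_id s).sub_const s
    have h2 : HasDerivAt (fun t : ℂ => Polynomial.eval t Q)
        (Polynomial.eval s (Polynomial.derivative Q)) s := Polynomial.hasDerivAt Q s
    have h3 := (h1.mul h2).const_add (g s)
    have h4 : HasDerivAt (fun t : ℂ => g s + (t - s) * Polynomial.eval t Q) 0 s := by
      exact h3.congr_deriv (by rw [hQs]; ring)
    exact h4.congr_of_eventuallyEq (Filter.Eventually.of_forall fun t => hfun t)
  -- conclusion: g is constant
  obtain ⟨G, hG⟩ := hgpoly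
  have hder0 : ∀ s : ℂ, Polynomial.eval s (Polynomial.derivative G) = 0 := by
    intro s
    have h1 : deriv g s = 0 := (hder s).deriv
    have h2 : g = fun t => Polynomial.eval t G := funext hG
    rw [h2, Polynomial.deriv] at h1
    exact h1
  have hGder : Polynomial.derivative G = 0 :=
    Polynomial.funext fun r => by rw [hder0 r, Polynomial.eval_zero]
  have hg10 : g 1 = g 0 := by
    rw [hG 1, hG 0, Polynomial.eq_C_of_derivative_eq_zero hGder]
    simp
  have hL : f (fun _ : Fin (n + 1) => expNil a (M + 1) * e * Ring.inverse (expNil a (M + 1))) h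
      = g 1 := by
    have h1 : (fun _ : Fin (n + 1) => expNil a (M + 1) * e * Ring.inverse (expNil a (M + 1)))
        = fun _ : Fin (n + 1) => ev 1 (EEp (M + 1) a e) := by
      funext _
      rw [hgoalL]
    rw [h1]
  have hR0 : g 0 = f (fun _ : Fin (n + 1) => e) h := by
    show f (fun _ : Fin (n + 1) => ev 0 (EEp (M + 1) a e)) h = _
    have h1 : (fun _ : Fin (n + 1) => ev 0 (EEp (M + 1) a e)) = fun _ : Fin (n + 1) => e := by
      funext _
      rw [hgoalR]
    rw [h1]
  rw [hL, hg10, hR0]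


end

end EquivCyclic
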